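/- Let 0 ≤ λ_i ≤ 1 with λ_1 + λ_2 < 1 and λ_2 + λ_3 < 1, and let the 3-queue path-graph system evolve under the Top-Down priority policy π_TD defined by: S(t) = (1,0,1) if Q_1(t) > 0; otherwise S(t) = (0,1,0) if Q_2(t) > 0; otherwise S(t) = (1,0,1). Then limsup_{T→∞} (1/T) ∑_{t=0}^{T−1} ∑_{i=1}^{3} E[Q_i(t)] < ∞, i.e., π_TD is throughput-optimal (and by the symmetric argument the Bottom-Up policy π_BU, which exchanges the roles of queues 1 and 3, is throughput-optimal as well). -/

import Mathlib

open MeasureTheory ProbabilityTheory Filter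
open scoped ENNReal

/-- The Top-Down priority policy π_TD for the 3-queue path graph:
serve queues 1 and 3 if queue 1 is nonempty; else serve queue 2 if nonempty;
else serve queues 1 and 3. -/
def piTD (q : Fin 3 → ℕ) : Fin 3 → ℕ :=
  if 0 < q 0 then ![1, 0, 1]
  else if 0 < q 1 then ![0, 1, 0]
  else ![1, 0, 1]

/-- The Bottom-Up priority policy π_BU, exchanging the roles of queues 1 and 3. -/
def piBU (q : Fin 3 → ℕ) : Fin 3 → ℕ :=
  if 0 < q 2 then ![1, 0, 1]
  else if 0 < q 1 then ![0, 1, 0]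
  else ![1, 0, 1]

lemma iIndepFun_reindex {Ω ι ι' β : Type*} [MeasurableSpace Ω] {μ : Measure Ω}
    [m : MeasurableSpace β] (e : ι' ≃ ι) (f : ι → Ω → β)
    (h : iIndepFun f μ) :
    iIndepFun (fun i => f (e i)) μ := by
  classical
  rw [iIndepFun_iff_measure_inter_preimage_eq_mul] at h ⊢
  intro S sets hsets
  have := h (S.map e.toEmbedding) (sets := fun j => sets (e.symm j))
    (by intro j hj; simp only [Finset.mem_map] at hj
        obtain ⟨i, hi, rfl⟩ := hj
        simpa using hsets i hi)
  rw [Finset.map_eq_image, Finset.set_biInter_finset_image, Finset.prod_image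
    (fun a _ b _ hab => e.toEmbedding.injective hab)] at this
  simpa using this

def qswap : Fin 3 ≃ Fin 3 := ⟨![2,1,0], ![2,1,0], by decide, by decide⟩

lemma qswap0 : qswap 0 = 2 := rfl
lemma qswap1 : qswap 1 = 1 := rfl
lemma qswap2 : qswap 2 = 0 := rfl

lemma piBU_swap (q : Fin 3 → ℕ) (i : Fin 3) :
    piBU q (qswap i) = piTD (fun j => q (qswap j)) i := by
  fin_cases i <;>
    · unfold piTD piBU
      by_cases h2 : 0 < q 2 <;> by_cases h1 : 0 < q 1 <;>
        simp [h1, h2, qswap0, qswap1, qswap2, qswap]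



lemma piTD0 (q : Fin 3 → ℕ) (h : q 0 ≤ 1) : q 0 - piTD q 0 = 0 := by
  unfold piTD; split_ifs <;> simp <;> omega

lemma piTD1 (q : Fin 3 → ℕ) (h : q 0 ≤ 1) : q 1 - piTD q 1 = q 1 - (1 - q 0) := by
  unfold piTD; split_ifs <;> simp <;> omega

lemma piTD2 (q : Fin 3 → ℕ) : q 2 - piTD q 2 = q 2 - (1 - (if q 0 = 0 ∧ 0 < q 1 then 1 else 0)) := by
  unfold piTD; split_ifs <;> simp_all


lemma drift1 (q b a : ℕ) (hb : b ≤ 1) (ha : a ≤ 1) :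
    (q - b + a)^2 + 2*(q*b) ≤ q^2 + 2 + 2*(q*a) := by
  interval_cases b <;> interval_cases a <;> rcases q with _ | k <;> simp <;> nlinarith

lemma drift2 (q1 q2 q3 a2 a3 : ℕ) (h1 : q1 ≤ 1) (h2 : a2 ≤ 1) (h3 : a3 ≤ 1) :
    ((q2 - (1 - q1) + a2) + (q3 - (1 - (if q1 = 0 ∧ 0 < q2 then 1 else 0)) + a3))^2
      + 2*(q2 + q3)
    ≤ (q2+q3)^2 + 4 + 2*((q2+q3)*a2 + (q2+q3)*a3) + 2*(q2*q1) := by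
  interval_cases q1 <;> interval_cases a2 <;> interval_cases a3 <;>
    rcases q2 with _ | k <;> rcases q3 with _ | m <;> simp <;> nlinarith

section main
variable {Ω : Type*} [MeasurableSpace Ω] (μ : Measure Ω) [IsProbabilityMeasure μ]

/-- measurable combination helper -/
lemma meas2 {f g : Ω → ℕ} (F : ℕ → ℕ → ℕ) (hf : Measurable f) (hg : Measurable g) :
    Measurable (fun ω => F (f ω) (g ω)) :=
  (measurable_of_countable (Function.uncurry F)).comp (hf.prodMk hg)

lemma main {Ω : Type*} [MeasurableSpace Ω] (μ : Measure Ω) [IsProbabilityMeasure μ]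
    (lam : Fin 3 → ℝ) (hlam : ∀ i, 0 ≤ lam i ∧ lam i ≤ 1)
    (hcap1 : lam 0 + lam 1 < 1) (hcap2 : lam 1 + lam 2 < 1)
    (A : Fin 3 → ℕ → Ω → ℕ)
    (hAmeas : ∀ i t, Measurable (A i t))
    (hA01 : ∀ i t ω, A i t ω ≤ 1)
    (hArate : ∀ i t, μ {ω | A i t ω = 1} = ENNReal.ofReal (lam i))
    (hAindep : iIndepFun
      (fun p : Fin 3 × ℕ => fun ω => A p.1 p.2 ω) μ)
    (Q : ℕ → Fin 3 → Ω → ℕ)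
    (hQ0 : ∀ i ω, Q 0 i ω = 0)
    (hQevol : ∀ t i ω, Q (t + 1) i ω = Q t i ω - piTD (fun j => Q t j ω) i + A i t ω) :
    limsup (fun T : ℕ =>
        (∑ t ∈ Finset.range T, ∑ i, ∫⁻ ω, (Q t i ω : ℝ≥0∞) ∂μ) / (T : ℝ≥0∞))
      atTop < ⊤ := by
  -- queue 0 is at most 1, and equals the previous arrival
  have h0le : ∀ t ω, Q t 0 ω ≤ 1 := by
    intro t
    induction t with
    | zero => intro ω; simp [hQ0]
    | succ t ih =>
      intro ω; rw [hQevol]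
      have h := piTD0 (fun j => Q t j ω) (ih ω)
      beta_reduce at h
      have := hA01 0 t ω; omega
  have h0eq : ∀ t ω, Q (t+1) 0 ω = A 0 t ω := by
    intro t ω; rw [hQevol]
    have h := piTD0 (fun j => Q t j ω) (h0le t ω)
    beta_reduce at h
    omega
  have hrec1 : ∀ t ω, Q (t+1) 1 ω = Q t 1 ω - (1 - Q t 0 ω) + A 1 t ω := by
    intro t ω; rw [hQevol]
    have h := piTD1 (fun j => Q t j ω) (h0le t ω)
    beta_reduce at h
    omega
  have hrec2 : ∀ t ω, Q (t+1) 2 ω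
      = Q t 2 ω - (1 - (if Q t 0 ω = 0 ∧ 0 < Q t 1 ω then 1 else 0)) + A 2 t ω := by
    intro t ω; rw [hQevol]
    have h := piTD2 (fun j => Q t j ω)
    beta_reduce at h
    rw [h]
  have hQle : ∀ t i ω, Q t i ω ≤ t := by
    intro t
    induction t with
    | zero => intro i ω; simp [hQ0]
    | succ t ih =>
      intro i ω; rw [hQevol]
      have := ih i ω; have := hA01 i t ω; omega
  have hQmeas : ∀ t i, Measurable (Q t i) := by
    intro t
    induction t with
    | zero =>
      intro i
      have : Q 0 i = fun _ => 0 := funext (hQ0 i)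
      rw [this]; exact measurable_const
    | succ t ih =>
      intro i
      have hpi : Measurable (fun ω => piTD (fun j => Q t j ω) i) := by
        have : (fun ω => piTD (fun j => Q t j ω) i)
            = fun ω => if 0 < Q t 0 ω then ![1,0,1] i
              else if 0 < Q t 1 ω then ![0,1,0] i else ![1,0,1] i := by
          funext ω; unfold piTD; split_ifs <;> rfl
        rw [this]
        have hs0 : MeasurableSet {ω | 0 < Q t 0 ω} := by
          have := (ih 0) (measurableSet_singleton 0)
          simpa [Set.preimage, Nat.pos_iff_ne_zero, Set.compl_setOf] using this.compl
        have hs1 : MeasurableSet {ω | 0 < Q t 1 ω} := by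
          have := (ih 1) (measurableSet_singleton 0)
          simpa [Set.preimage, Nat.pos_iff_ne_zero, Set.compl_setOf] using this.compl
        exact Measurable.ite hs0 measurable_const (Measurable.ite hs1 measurable_const measurable_const)
      have : (fun ω => Q (t+1) i ω)
          = fun ω => Q t i ω - piTD (fun j => Q t j ω) i + A i t ω := by
        funext ω; exact hQevol t i ω
      rw [show Q (t+1) i = fun ω => Q t i ω - piTD (fun j => Q t j ω) i + A i t ω from this]
      exact ((ih i).sub hpi).add (hAmeas i t)
  classical
  set Sfin : ℕ → Finset (Fin 3 × ℕ) :=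
    fun t => (Finset.univ ×ˢ Finset.range t).filter (fun p => p.1 = 0 → p.2 + 1 < t) with hSfin
  have hmem : ∀ t (p : Fin 3 × ℕ), p ∈ Sfin t ↔ (p.2 < t ∧ (p.1 = 0 → p.2 + 1 < t)) := by
    intro t p; simp [hSfin]
  have hmono : ∀ t, Sfin t ⊆ Sfin (t+1) := by
    intro t p hp
    rw [hmem] at hp ⊢
    omega
  have hfun : ∀ t, ∃ g : ((Fin 3 × ℕ) → ℕ) → ℕ × ℕ, Measurable g ∧
      ∀ ω, g (fun p => if p ∈ Sfin t then A p.1 p.2 ω else 0) = (Q t 1 ω, Q t 2 ω) := by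
    intro t
    induction t with
    | zero => exact ⟨fun _ => (0,0), measurable_const, fun ω => by simp [hQ0]⟩
    | succ t ih =>
      obtain ⟨g, hg, hgeq⟩ := ih
      set step : (ℕ×ℕ) × ℕ × ℕ × ℕ → ℕ × ℕ := fun x =>
        (x.1.1 - (1 - x.2.1) + x.2.2.1,
         x.1.2 - (1 - (if x.2.1 = 0 ∧ 0 < x.1.1 then 1 else 0)) + x.2.2.2) with hstep
      refine ⟨fun m => step (g (fun p => if p ∈ Sfin t then m p else 0),
        m (0, t-1), m (1, t), m (2, t)), ?_, ?_⟩
      · apply (measurable_of_countable step).comp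
        apply Measurable.prodMk
        · apply hg.comp
          apply measurable_pi_lambda
          intro p
          by_cases hp : p ∈ Sfin t
          · simp only [if_pos hp]; exact measurable_pi_apply p
          · simp only [if_neg hp]; exact measurable_const
        · exact (measurable_pi_apply _).prodMk
            ((measurable_pi_apply _).prodMk (measurable_pi_apply _))
      · intro ω
        have htr : (fun p => if p ∈ Sfin t
              then (if p ∈ Sfin (t+1) then A p.1 p.2 ω else 0) else 0)
            = fun p => if p ∈ Sfin t then A p.1 p.2 ω else 0 := by
          funext p
          by_cases hp : p ∈ Sfin t
          · simp [hp, hmono t hp]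
          · simp [hp]
        have h1 : (if ((0:Fin 3), t-1) ∈ Sfin (t+1) then A 0 (t-1) ω else 0) = Q t 0 ω := by
          rcases t with _ | s
          · rw [if_neg]
            · simp [hQ0]
            · rw [hmem]; simp
          · rw [if_pos]
            · simp only [Nat.succ_sub_one]
              exact (h0eq s ω).symm
            · rw [hmem]; simp
        have h2 : (if ((1:Fin 3), t) ∈ Sfin (t+1) then A 1 t ω else 0) = A 1 t ω := by
          rw [if_pos]; rw [hmem]
          refine ⟨Nat.lt_succ_self t, fun h => ?_⟩
          have : (1 : Fin 3) ≠ 0 := by decide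
          exact absurd h this
        have h3 : (if ((2:Fin 3), t) ∈ Sfin (t+1) then A 2 t ω else 0) = A 2 t ω := by
          rw [if_pos]; rw [hmem]
          refine ⟨Nat.lt_succ_self t, fun h => ?_⟩
          have : (2 : Fin 3) ≠ 0 := by decide
          exact absurd h this
        show step (g _, _, _, _) = _
        beta_reduce
        rw [htr, hgeq, h1, h2, h3, hstep]
        beta_reduce
        rw [hrec1, hrec2]
  -- independence of (Q t 1, Q t 2) from future/unused arrivals
  have hpairIndep : ∀ t (j : Fin 3) (s : ℕ), (j, s) ∉ Sfin t →
      IndepFun (fun ω => (Q t 1 ω, Q t 2 ω)) (A j s) μ := by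
    intro t j s hjs
    obtain ⟨g, hg, hgeq⟩ := hfun t
    have hdisj : Disjoint (Sfin t) ({(j, s)} : Finset (Fin 3 × ℕ)) := by
      simp [Finset.disjoint_singleton_right, hjs]
    have base := hAindep.indepFun_finset (Sfin t) {(j, s)} hdisj
      (fun p => hAmeas p.1 p.2)
    set ext : ((p : (Sfin t : Finset (Fin 3 × ℕ))) → ℕ) → (Fin 3 × ℕ) → ℕ :=
      fun r p => if h : p ∈ Sfin t then r ⟨p, h⟩ else 0 with hext
    have hextm : Measurable ext := by
      apply measurable_pi_lambda
      intro p
      by_cases hp : p ∈ Sfin t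
      · simp only [hext, dif_pos hp]; exact measurable_pi_apply _
      · simp only [hext, dif_neg hp]; exact measurable_const
    have hone : Measurable (fun r : ((p : ({(j,s)} : Finset (Fin 3 × ℕ))) → ℕ) =>
        r ⟨(j,s), Finset.mem_singleton_self _⟩) := measurable_pi_apply _
    have key := base.comp (hg.comp hextm) hone
    have heq : ((g ∘ ext) ∘ (fun a (i : (Sfin t : Finset (Fin 3 × ℕ))) =>
          A i.1.1 i.1.2 a)) = fun ω => (Q t 1 ω, Q t 2 ω) := by
      funext ω
      have : ext (fun (p : (Sfin t : Finset (Fin 3 × ℕ))) => A p.1.1 p.1.2 ω)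
          = fun p => if p ∈ Sfin t then A p.1 p.2 ω else 0 := by
        funext p; by_cases hp : p ∈ Sfin t <;> simp [hext, hp]
      simp only [Function.comp_apply, this, hgeq]
    rw [heq] at key
    exact key
  -- constants
  have mcast : ∀ {f : Ω → ℕ}, Measurable f → Measurable (fun ω => (f ω : ℝ≥0∞)) :=
    fun hf => (measurable_of_countable _).comp hf
  set l0 := ENNReal.ofReal (lam 0) with hl0
  set l1 := ENNReal.ofReal (lam 1) with hl1
  set l2 := ENNReal.ofReal (lam 2) with hl2
  have hEA : ∀ (j : Fin 3) (s : ℕ),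
      ∫⁻ ω, (A j s ω : ℝ≥0∞) ∂μ = ENNReal.ofReal (lam j) := by
    intro j s
    have hset : MeasurableSet {ω | A j s ω = 1} := hAmeas j s (measurableSet_singleton 1)
    have hptw : (fun ω => (A j s ω : ℝ≥0∞)) = {ω | A j s ω = 1}.indicator (fun _ => 1) := by
      funext ω
      by_cases h : A j s ω = 1
      · rw [Set.indicator_of_mem (by exact h)]; simp [h]
      · have h0 : A j s ω = 0 := by have := hA01 j s ω; omega
        rw [Set.indicator_of_notMem (by exact h)]; simp [h0]
    rw [hptw, lintegral_indicator hset]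
    simp [hArate j s]
  have hEB : ∀ (j : Fin 3) (s : ℕ),
      ∫⁻ ω, ((1 - A j s ω : ℕ) : ℝ≥0∞) ∂μ = 1 - ENNReal.ofReal (lam j) := by
    intro j s
    have hset : MeasurableSet {ω | A j s ω = 1} := hAmeas j s (measurableSet_singleton 1)
    have hptw : (fun ω => ((1 - A j s ω : ℕ) : ℝ≥0∞))
        = ({ω | A j s ω = 1})ᶜ.indicator (fun _ => 1) := by
      funext ω
      by_cases h : A j s ω = 1
      · rw [Set.indicator_of_notMem (by simpa using h)]; simp [h]
      · have h0 : A j s ω = 0 := by have := hA01 j s ω; omega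
        rw [Set.indicator_of_mem (by simpa using h)]; simp [h0]
    rw [hptw, lintegral_indicator hset.compl]
    simp [prob_compl_eq_one_sub hset, hArate j s]
  have hnot1 : ∀ t : ℕ, ((1:Fin 3), t) ∉ Sfin t := by
    intro t; rw [hmem]; simp
  have hnot2 : ∀ t : ℕ, ((2:Fin 3), t) ∉ Sfin t := by
    intro t; rw [hmem]; simp
  have hnot0 : ∀ t : ℕ, ((0:Fin 3), t-1) ∉ Sfin t := by
    intro t; rw [hmem]; rintro ⟨h1, h2⟩; have := h2 rfl; omega
  have hprod : ∀ (t : ℕ) (F : ℕ × ℕ → ℕ) (ψ : ℕ → ℕ) (j : Fin 3) (s : ℕ), (j,s) ∉ Sfin t →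
      ∫⁻ ω, (F (Q t 1 ω, Q t 2 ω) : ℝ≥0∞) * (ψ (A j s ω) : ℝ≥0∞) ∂μ
      = (∫⁻ ω, (F (Q t 1 ω, Q t 2 ω) : ℝ≥0∞) ∂μ) * ∫⁻ ω, (ψ (A j s ω) : ℝ≥0∞) ∂μ := by
    intro t F ψ j s hjs
    have hind := (hpairIndep t j s hjs).comp
      (φ := fun p : ℕ × ℕ => (F p : ℝ≥0∞)) (ψ := fun n : ℕ => (ψ n : ℝ≥0∞))
      (measurable_of_countable _) (measurable_of_countable _)
    exact lintegral_mul_eq_lintegral_mul_lintegral_of_indepFun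
      ((measurable_of_countable (fun p : ℕ × ℕ => (F p : ℝ≥0∞))).comp ((hQmeas t 1).prodMk (hQmeas t 2)))
      ((measurable_of_countable (fun n : ℕ => (ψ n : ℝ≥0∞))).comp (hAmeas j s)) hind
  -- abbreviations
  set e2 : ℕ → ℝ≥0∞ := fun t => ∫⁻ ω, (Q t 1 ω : ℝ≥0∞) ∂μ with he2
  set ez : ℕ → ℝ≥0∞ := fun t => ∫⁻ ω, ((Q t 1 ω + Q t 2 ω : ℕ) : ℝ≥0∞) ∂μ with hez
  set f2 : ℕ → ℝ≥0∞ := fun t => ∫⁻ ω, ((Q t 1 ω ^ 2 : ℕ) : ℝ≥0∞) ∂μ with hf2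
  set fz : ℕ → ℝ≥0∞ := fun t => ∫⁻ ω, (((Q t 1 ω + Q t 2 ω) ^ 2 : ℕ) : ℝ≥0∞) ∂μ with hfz
  have hboundInt : ∀ (f : Ω → ℕ) (c : ℕ), (∀ ω, f ω ≤ c) →
      ∫⁻ ω, (f ω : ℝ≥0∞) ∂μ ≤ (c : ℝ≥0∞) := by
    intro f c h
    calc ∫⁻ ω, (f ω : ℝ≥0∞) ∂μ ≤ ∫⁻ _, (c : ℝ≥0∞) ∂μ :=
          lintegral_mono fun ω => Nat.cast_le.2 (h ω)
      _ = c := by simp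
  have he2fin : ∀ t, e2 t ≠ ⊤ :=
    fun t => ((hboundInt _ t (hQle t 1)).trans_lt (ENNReal.natCast_lt_top t)).ne
  have hezfin : ∀ t, ez t ≠ ⊤ :=
    fun t => ((hboundInt _ (t + t) (fun ω => add_le_add (hQle t 1 ω) (hQle t 2 ω))).trans_lt
      (ENNReal.natCast_lt_top _)).ne
  -- splitting helpers
  have hsplit : ∀ (f g : Ω → ℕ), Measurable f → Measurable g →
      ∫⁻ ω, ((f ω + 2 * (g ω) : ℕ) : ℝ≥0∞) ∂μ
        = (∫⁻ ω, (f ω : ℝ≥0∞) ∂μ) + 2 * ∫⁻ ω, (g ω : ℝ≥0∞) ∂μ := by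
    intro f g hf hg
    have hpt : ∀ ω, ((f ω + 2 * (g ω) : ℕ) : ℝ≥0∞) = (f ω : ℝ≥0∞) + 2 * (g ω : ℝ≥0∞) := by
      intro ω; push_cast; ring
    rw [lintegral_congr hpt, lintegral_add_left (mcast hf), lintegral_const_mul 2 (mcast hg)]
  have hsplit2 : ∀ (f g : Ω → ℕ), Measurable f → Measurable g →
      ∫⁻ ω, ((f ω + 2 + 2 * (g ω) : ℕ) : ℝ≥0∞) ∂μ
        = (∫⁻ ω, (f ω : ℝ≥0∞) ∂μ) + 2 + 2 * ∫⁻ ω, (g ω : ℝ≥0∞) ∂μ := by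
    intro f g hf hg
    have hpt : ∀ ω, ((f ω + 2 + 2 * (g ω) : ℕ) : ℝ≥0∞)
        = ((f ω : ℝ≥0∞) + 2) + 2 * (g ω : ℝ≥0∞) := by
      intro ω; push_cast; ring
    rw [lintegral_congr hpt, lintegral_add_left (f := fun ω => (f ω : ℝ≥0∞) + 2) ((mcast hf).add measurable_const),
      lintegral_const_mul 2 (mcast hg), lintegral_add_left (mcast hf)]
    simp [lintegral_const]
  have hsplitZ : ∀ (f g1 g2 g3 : Ω → ℕ), Measurable f → Measurable g1 → Measurable g2 →
      Measurable g3 →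
      ∫⁻ ω, ((f ω + 4 + 2 * (g1 ω + g2 ω) + 2 * (g3 ω) : ℕ) : ℝ≥0∞) ∂μ
        = (∫⁻ ω, (f ω : ℝ≥0∞) ∂μ) + 4
          + 2 * ((∫⁻ ω, (g1 ω : ℝ≥0∞) ∂μ) + ∫⁻ ω, (g2 ω : ℝ≥0∞) ∂μ)
          + 2 * ∫⁻ ω, (g3 ω : ℝ≥0∞) ∂μ := by
    intro f g1 g2 g3 hf hg1 hg2 hg3
    have hpt : ∀ ω, ((f ω + 4 + 2 * (g1 ω + g2 ω) + 2 * (g3 ω) : ℕ) : ℝ≥0∞)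
        = (((f ω : ℝ≥0∞) + 4) + 2 * ((g1 ω : ℝ≥0∞) + (g2 ω : ℝ≥0∞))) + 2 * (g3 ω : ℝ≥0∞) := by
      intro ω; push_cast; ring
    rw [lintegral_congr hpt,
      lintegral_add_left (f := fun ω => ((f ω : ℝ≥0∞) + 4) + 2 * ((g1 ω : ℝ≥0∞) + (g2 ω : ℝ≥0∞))) (((mcast hf).add measurable_const).add
        (((mcast hg1).add (mcast hg2)).const_mul 2)),
      lintegral_const_mul 2 (mcast hg3),
      lintegral_add_left (f := fun ω => (f ω : ℝ≥0∞) + 4) ((mcast hf).add measurable_const),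
      lintegral_const_mul 2 (f := fun ω => (g1 ω : ℝ≥0∞) + (g2 ω : ℝ≥0∞)) ((mcast hg1).add (mcast hg2)),
      lintegral_add_left (mcast hf), lintegral_add_left (mcast hg1)]
    simp [lintegral_const]
  -- product identities
  have hPB : ∀ t, ∫⁻ ω, ((Q t 1 ω * (1 - Q t 0 ω) : ℕ) : ℝ≥0∞) ∂μ = e2 t * (1 - l0) := by
    intro t
    rcases t with _ | s
    · simp [hQ0, he2]
    · have hpt : ∀ ω, ((Q (s+1) 1 ω * (1 - Q (s+1) 0 ω) : ℕ) : ℝ≥0∞)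
          = ((Q (s+1) 1 ω : ℕ) : ℝ≥0∞) * (((1 - A 0 s ω : ℕ) : ℕ) : ℝ≥0∞) := by
        intro ω; rw [h0eq s ω]; push_cast; ring
      rw [lintegral_congr hpt]
      have := hprod (s+1) (fun p => p.1) (fun n => 1 - n) 0 s (by
        have := hnot0 (s+1); simpa using this)
      simp only [] at this
      rw [this, hEB 0 s, hl0]
  have hPQ0 : ∀ t, ∫⁻ ω, ((Q t 1 ω * Q t 0 ω : ℕ) : ℝ≥0∞) ∂μ ≤ e2 t * l0 := by
    intro t
    rcases t with _ | s
    · simp [hQ0]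
    · have hpt : ∀ ω, ((Q (s+1) 1 ω * Q (s+1) 0 ω : ℕ) : ℝ≥0∞)
          = ((Q (s+1) 1 ω : ℕ) : ℝ≥0∞) * ((A 0 s ω : ℕ) : ℝ≥0∞) := by
        intro ω; rw [h0eq s ω]; push_cast; ring
      rw [lintegral_congr hpt]
      have := hprod (s+1) (fun p => p.1) (fun n => n) 0 s (by
        have := hnot0 (s+1); simpa using this)
      simp only [] at this
      rw [this, hEA 0 s, hl0]
  have hPA1 : ∀ t, ∫⁻ ω, ((Q t 1 ω * A 1 t ω : ℕ) : ℝ≥0∞) ∂μ = e2 t * l1 := by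
    intro t
    have hpt : ∀ ω, ((Q t 1 ω * A 1 t ω : ℕ) : ℝ≥0∞)
        = ((Q t 1 ω : ℕ) : ℝ≥0∞) * ((A 1 t ω : ℕ) : ℝ≥0∞) := by
      intro ω; push_cast; ring
    rw [lintegral_congr hpt]
    have := hprod t (fun p => p.1) (fun n => n) 1 t (hnot1 t)
    simp only [] at this
    rw [this, hEA 1 t, hl1]
  have hPZ : ∀ t (j : Fin 3), (j, t) ∉ Sfin t →
      ∫⁻ ω, (((Q t 1 ω + Q t 2 ω) * A j t ω : ℕ) : ℝ≥0∞) ∂μ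
        = ez t * ENNReal.ofReal (lam j) := by
    intro t j hj
    have hpt : ∀ ω, (((Q t 1 ω + Q t 2 ω) * A j t ω : ℕ) : ℝ≥0∞)
        = (((Q t 1 ω + Q t 2 ω : ℕ) : ℕ) : ℝ≥0∞) * ((A j t ω : ℕ) : ℝ≥0∞) := by
      intro ω; push_cast; ring
    rw [lintegral_congr hpt]
    have := hprod t (fun p => p.1 + p.2) (fun n => n) j t hj
    simp only [] at this
    rw [this, hEA j t, hez]
  -- drift inequalities in expectation
  have hS2 : ∀ t, f2 (t+1) + 2 * (e2 t * (1 - l0)) ≤ f2 t + 2 + 2 * (e2 t * l1) := by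
    intro t
    have hm1 : Measurable fun ω => Q (t+1) 1 ω ^ 2 :=
      meas2 (fun a _ => a ^ 2) (hQmeas (t+1) 1) (hQmeas (t+1) 1)
    have hmB : Measurable fun ω => Q t 1 ω * (1 - Q t 0 ω) :=
      meas2 (fun a b => a * (1 - b)) (hQmeas t 1) (hQmeas t 0)
    have hm2 : Measurable fun ω => Q t 1 ω ^ 2 :=
      meas2 (fun a _ => a ^ 2) (hQmeas t 1) (hQmeas t 1)
    have hmA : Measurable fun ω => Q t 1 ω * A 1 t ω :=
      meas2 (· * ·) (hQmeas t 1) (hAmeas 1 t)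
    calc f2 (t+1) + 2 * (e2 t * (1 - l0))
        = ∫⁻ ω, ((Q (t+1) 1 ω ^ 2 + 2 * (Q t 1 ω * (1 - Q t 0 ω)) : ℕ) : ℝ≥0∞) ∂μ := by
          rw [hsplit _ _ hm1 hmB, hPB t]
      _ ≤ ∫⁻ ω, ((Q t 1 ω ^ 2 + 2 + 2 * (Q t 1 ω * A 1 t ω) : ℕ) : ℝ≥0∞) ∂μ := by
          apply lintegral_mono; intro ω
          have h := drift1 (Q t 1 ω) (1 - Q t 0 ω) (A 1 t ω) (Nat.sub_le 1 _) (hA01 1 t ω)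
          rw [← hrec1 t ω] at h
          beta_reduce
          exact_mod_cast h
      _ = f2 t + 2 + 2 * (e2 t * l1) := by
          rw [hsplit2 _ _ hm2 hmA, hPA1 t]
  have hSZ : ∀ t, fz (t+1) + 2 * ez t
      ≤ fz t + 4 + 2 * (ez t * l1 + ez t * l2) + 2 * (e2 t * l0) := by
    intro t
    have hm1 : Measurable fun ω => (Q (t+1) 1 ω + Q (t+1) 2 ω) ^ 2 :=
      meas2 (fun a b => (a + b) ^ 2) (hQmeas (t+1) 1) (hQmeas (t+1) 2)
    have hmz : Measurable fun ω => Q t 1 ω + Q t 2 ω :=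
      meas2 (· + ·) (hQmeas t 1) (hQmeas t 2)
    have hm2 : Measurable fun ω => (Q t 1 ω + Q t 2 ω) ^ 2 :=
      meas2 (fun a b => (a + b) ^ 2) (hQmeas t 1) (hQmeas t 2)
    have hmza1 : Measurable fun ω => (Q t 1 ω + Q t 2 ω) * A 1 t ω :=
      (meas2 (· * ·) hmz (hAmeas 1 t))
    have hmza2 : Measurable fun ω => (Q t 1 ω + Q t 2 ω) * A 2 t ω :=
      (meas2 (· * ·) hmz (hAmeas 2 t))
    have hmq0 : Measurable fun ω => Q t 1 ω * Q t 0 ω :=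
      meas2 (· * ·) (hQmeas t 1) (hQmeas t 0)
    calc fz (t+1) + 2 * ez t
        = ∫⁻ ω, (((Q (t+1) 1 ω + Q (t+1) 2 ω) ^ 2 + 2 * (Q t 1 ω + Q t 2 ω) : ℕ) : ℝ≥0∞) ∂μ := by
          rw [hsplit _ _ hm1 hmz]
      _ ≤ ∫⁻ ω, (((Q t 1 ω + Q t 2 ω) ^ 2 + 4
            + 2 * ((Q t 1 ω + Q t 2 ω) * A 1 t ω + (Q t 1 ω + Q t 2 ω) * A 2 t ω)
            + 2 * (Q t 1 ω * Q t 0 ω) : ℕ) : ℝ≥0∞) ∂μ := by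
          apply lintegral_mono; intro ω
          have h := drift2 (Q t 0 ω) (Q t 1 ω) (Q t 2 ω) (A 1 t ω) (A 2 t ω)
            (h0le t ω) (hA01 1 t ω) (hA01 2 t ω)
          rw [← hrec1 t ω, ← hrec2 t ω] at h
          beta_reduce
          exact_mod_cast h
      _ ≤ fz t + 4 + 2 * (ez t * l1 + ez t * l2) + 2 * (e2 t * l0) := by
          rw [hsplitZ _ _ _ _ hm2 hmza1 hmza2 hmq0, hPZ t 1 (hnot1 t), hPZ t 2 (hnot2 t)]
          exact add_le_add_right (mul_le_mul_right (hPQ0 t) 2) _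
  -- constants for the Lyapunov combination
  have hl0le : (0:ℝ) ≤ lam 0 := (hlam 0).1
  have hl1le : (0:ℝ) ≤ lam 1 := (hlam 1).1
  have hl2le : (0:ℝ) ≤ lam 2 := (hlam 2).1
  have hKden : (0:ℝ) < 1 - lam 0 - lam 1 := by linarith
  set K : ℝ := 2 / (1 - lam 0 - lam 1) with hKdef
  have hKpos : 0 < K := by positivity
  set κ := ENNReal.ofReal K with hκ
  have hκne : κ ≠ ⊤ := ENNReal.ofReal_ne_top
  set δ : ℝ := 1 - lam 1 - lam 2 with hδ
  have hδpos : 0 < δ := by simp only [hδ]; linarith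
  set dE := ENNReal.ofReal δ with hdE
  have hcoef1 : κ * l1 + l0 ≤ κ * (1 - l0) := by
    rw [hκ, hl0, hl1]
    rw [show (1:ℝ≥0∞) - ENNReal.ofReal (lam 0) = ENNReal.ofReal (1 - lam 0) by
      rw [← ENNReal.ofReal_one, ← ENNReal.ofReal_sub _ hl0le]]
    rw [← ENNReal.ofReal_mul hKpos.le, ← ENNReal.ofReal_add (by positivity) hl0le,
      ← ENNReal.ofReal_mul hKpos.le]
    apply ENNReal.ofReal_le_ofReal
    have hKe : K * (1 - lam 0 - lam 1) = 2 := by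
      rw [hKdef]; field_simp
    nlinarith [(hlam 0).2]
  have hcoef2 : dE + (l1 + l2) = 1 := by
    rw [hdE, hl1, hl2, ← ENNReal.ofReal_add hl1le hl2le,
      ← ENNReal.ofReal_add hδpos.le (by positivity)]
    rw [show δ + (lam 1 + lam 2) = 1 by rw [hδ]; ring]
    exact ENNReal.ofReal_one
  -- per-step combined Lyapunov inequality
  have hstepIneq : ∀ t, (κ * f2 (t+1) + fz (t+1)) + 2 * dE * ez t
      ≤ (κ * f2 t + fz t) + (2 * κ + 4) := by
    intro t
    set D := 2 * (κ * (e2 t * l1)) + 2 * (e2 t * l0) + 2 * (ez t * (l1 + l2)) with hD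
    have hl0ne : l0 ≠ ⊤ := ENNReal.ofReal_ne_top
    have hl1ne : l1 ≠ ⊤ := ENNReal.ofReal_ne_top
    have hl2ne : l2 ≠ ⊤ := ENNReal.ofReal_ne_top
    have hDne : D ≠ ⊤ := by
      rw [hD]
      refine ENNReal.add_ne_top.2 ⟨ENNReal.add_ne_top.2 ⟨?_, ?_⟩, ?_⟩
      · exact ENNReal.mul_ne_top (by simp) (ENNReal.mul_ne_top hκne
          (ENNReal.mul_ne_top (he2fin t) hl1ne))
      · exact ENNReal.mul_ne_top (by simp) (ENNReal.mul_ne_top (he2fin t) hl0ne)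
      · exact ENNReal.mul_ne_top (by simp) (ENNReal.mul_ne_top (hezfin t)
          (ENNReal.add_ne_top.2 ⟨hl1ne, hl2ne⟩))
    rw [← ENNReal.add_le_add_iff_right hDne]
    have hA2 : 2 * dE * ez t + 2 * (ez t * (l1 + l2)) = 2 * ez t := by
      rw [show 2 * dE * ez t + 2 * (ez t * (l1 + l2)) = 2 * ((dE + (l1 + l2)) * ez t) by ring,
        hcoef2, one_mul]
    have hA3 : 2 * (κ * (e2 t * l1)) + 2 * (e2 t * l0) ≤ 2 * (κ * (e2 t * (1 - l0))) := by
      calc 2 * (κ * (e2 t * l1)) + 2 * (e2 t * l0) = 2 * ((κ * l1 + l0) * e2 t) := by ring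
        _ ≤ 2 * ((κ * (1 - l0)) * e2 t) := mul_le_mul_right (mul_le_mul_left hcoef1 _) 2
        _ = 2 * (κ * (e2 t * (1 - l0))) := by ring
    calc (κ * f2 (t+1) + fz (t+1)) + 2 * dE * ez t + D
        = (κ * f2 (t+1) + (2 * (κ * (e2 t * l1)) + 2 * (e2 t * l0)))
          + (fz (t+1) + (2 * dE * ez t + 2 * (ez t * (l1 + l2)))) := by rw [hD]; ring
      _ ≤ (κ * f2 (t+1) + 2 * (κ * (e2 t * (1 - l0)))) + (fz (t+1) + 2 * ez t) := by
          exact add_le_add (add_le_add_right hA3 _) (le_of_eq (by rw [hA2]))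
      _ ≤ κ * (f2 t + 2 + 2 * (e2 t * l1))
          + (fz t + 4 + 2 * (ez t * l1 + ez t * l2) + 2 * (e2 t * l0)) := by
          refine add_le_add ?_ (hSZ t)
          calc κ * f2 (t+1) + 2 * (κ * (e2 t * (1 - l0)))
              = κ * (f2 (t+1) + 2 * (e2 t * (1 - l0))) := by ring
            _ ≤ κ * (f2 t + 2 + 2 * (e2 t * l1)) := mul_le_mul_right (hS2 t) κ
      _ = (κ * f2 t + fz t) + (2 * κ + 4) + D := by rw [hD]; ring
  -- telescoping
  have htel : ∀ T : ℕ, (κ * f2 T + fz T) + 2 * dE * ∑ t ∈ Finset.range T, ez t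
      ≤ (2 * κ + 4) * T := by
    intro T
    induction T with
    | zero => simp [hf2, hfz, hQ0]
    | succ T ih =>
      rw [Finset.sum_range_succ]
      calc (κ * f2 (T+1) + fz (T+1)) + 2 * dE * (∑ t ∈ Finset.range T, ez t + ez T)
          = ((κ * f2 (T+1) + fz (T+1)) + 2 * dE * ez T)
            + 2 * dE * ∑ t ∈ Finset.range T, ez t := by ring
        _ ≤ ((κ * f2 T + fz T) + (2 * κ + 4)) + 2 * dE * ∑ t ∈ Finset.range T, ez t :=
            add_le_add_left (hstepIneq T) _
        _ = ((κ * f2 T + fz T) + 2 * dE * ∑ t ∈ Finset.range T, ez t) + (2 * κ + 4) := by ring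
        _ ≤ (2 * κ + 4) * T + (2 * κ + 4) := add_le_add_left ih _
        _ = (2 * κ + 4) * (T + 1 : ℕ) := by push_cast; ring
  have h2d0 : (2 * dE) ≠ 0 := by
    refine mul_ne_zero (by simp) ?_
    rw [hdE]
    exact (ENNReal.ofReal_pos.2 hδpos).ne'
  have h2dtop : (2 * dE) ≠ ⊤ := ENNReal.mul_ne_top (by simp) ENNReal.ofReal_ne_top
  have hCne : (2 * κ + 4) ≠ ⊤ :=
    ENNReal.add_ne_top.2 ⟨ENNReal.mul_ne_top (by simp) hκne, by simp⟩
  have hsumez : ∀ T : ℕ, ∑ t ∈ Finset.range T, ez t ≤ ((2 * κ + 4) / (2 * dE)) * T := by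
    intro T
    have h1 : 2 * dE * ∑ t ∈ Finset.range T, ez t ≤ (2 * κ + 4) * T :=
      le_trans (le_add_self) (htel T)
    have h2 : ∑ t ∈ Finset.range T, ez t ≤ ((2 * κ + 4) * T) / (2 * dE) := by
      rw [ENNReal.le_div_iff_mul_le (Or.inl h2d0) (Or.inl h2dtop)]
      rw [mul_comm]
      exact h1
    calc ∑ t ∈ Finset.range T, ez t ≤ ((2 * κ + 4) * T) / (2 * dE) := h2
      _ = ((2 * κ + 4) / (2 * dE)) * T := by
          rw [div_eq_mul_inv, div_eq_mul_inv, mul_right_comm]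
  set c0 := 1 + (2 * κ + 4) / (2 * dE) with hc0
  have hc0ne : c0 ≠ ⊤ := by
    rw [hc0]
    exact ENNReal.add_ne_top.2 ⟨by simp, (ENNReal.div_lt_top hCne h2d0).ne⟩
  have hST : ∀ T : ℕ, (∑ t ∈ Finset.range T, ∑ i, ∫⁻ ω, (Q t i ω : ℝ≥0∞) ∂μ)
      ≤ c0 * T := by
    intro T
    have hterm : ∀ t, (∑ i, ∫⁻ ω, (Q t i ω : ℝ≥0∞) ∂μ) ≤ 1 + ez t := by
      intro t
      rw [Fin.sum_univ_three]
      have h0 : ∫⁻ ω, (Q t 0 ω : ℝ≥0∞) ∂μ ≤ 1 := by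
        have := hboundInt (Q t 0) 1 (h0le t)
        simpa using this
      have h12 : (∫⁻ ω, (Q t 1 ω : ℝ≥0∞) ∂μ) + (∫⁻ ω, (Q t 2 ω : ℝ≥0∞) ∂μ) = ez t := by
        show _ = ∫⁻ ω, ((Q t 1 ω + Q t 2 ω : ℕ) : ℝ≥0∞) ∂μ
        have hpt : ∀ ω, ((Q t 1 ω + Q t 2 ω : ℕ) : ℝ≥0∞)
            = (Q t 1 ω : ℝ≥0∞) + (Q t 2 ω : ℝ≥0∞) := by intro ω; push_cast; ring
        rw [lintegral_congr hpt, lintegral_add_left (mcast (hQmeas t 1))]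
      calc (∫⁻ ω, (Q t 0 ω : ℝ≥0∞) ∂μ) + (∫⁻ ω, (Q t 1 ω : ℝ≥0∞) ∂μ)
            + (∫⁻ ω, (Q t 2 ω : ℝ≥0∞) ∂μ)
          = (∫⁻ ω, (Q t 0 ω : ℝ≥0∞) ∂μ)
            + ((∫⁻ ω, (Q t 1 ω : ℝ≥0∞) ∂μ) + (∫⁻ ω, (Q t 2 ω : ℝ≥0∞) ∂μ)) := by ring
        _ ≤ 1 + ez t := add_le_add h0 (le_of_eq h12)
    calc (∑ t ∈ Finset.range T, ∑ i, ∫⁻ ω, (Q t i ω : ℝ≥0∞) ∂μ)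
        ≤ ∑ t ∈ Finset.range T, (1 + ez t) := Finset.sum_le_sum (fun t _ => hterm t)
      _ = (T : ℝ≥0∞) + ∑ t ∈ Finset.range T, ez t := by
          rw [Finset.sum_add_distrib, Finset.sum_const, Finset.card_range]
          simp
      _ ≤ (T : ℝ≥0∞) + ((2 * κ + 4) / (2 * dE)) * T := add_le_add_right (hsumez T) _
      _ = c0 * T := by rw [hc0]; ring
  have hdiv : ∀ T : ℕ, (∑ t ∈ Finset.range T, ∑ i, ∫⁻ ω, (Q t i ω : ℝ≥0∞) ∂μ)
      / (T : ℝ≥0∞) ≤ c0 := fun T => ENNReal.div_le_of_le_mul (hST T)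
  have hlim : limsup (fun T : ℕ =>
      (∑ t ∈ Finset.range T, ∑ i, ∫⁻ ω, (Q t i ω : ℝ≥0∞) ∂μ) / (T : ℝ≥0∞)) atTop ≤ c0 :=
    limsup_le_of_le (by isBoundedDefault) (Filter.Eventually.of_forall hdiv)
  exact lt_of_le_of_lt hlim (lt_top_iff_ne_top.2 hc0ne)
end main


/-- Throughput optimality of the Top-Down (and, symmetrically, Bottom-Up) priority policy
for the 3-queue path graph: for any rates with `λ_1+λ_2 < 1` and `λ_2+λ_3 < 1`,
the time-averaged total expected backlog has finite limsup. -/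
theorem piTD_piBU_throughput_optimal
    {Ω : Type*} [MeasurableSpace Ω] (μ : Measure Ω) [IsProbabilityMeasure μ]
    (lam : Fin 3 → ℝ) (hlam : ∀ i, 0 ≤ lam i ∧ lam i ≤ 1)
    (hcap1 : lam 0 + lam 1 < 1) (hcap2 : lam 1 + lam 2 < 1)
    (A : Fin 3 → ℕ → Ω → ℕ)
    (hAmeas : ∀ i t, Measurable (A i t))
    (hA01 : ∀ i t ω, A i t ω ≤ 1)
    (hArate : ∀ i t, μ {ω | A i t ω = 1} = ENNReal.ofReal (lam i))
    (hAindep : iIndepFun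
      (fun p : Fin 3 × ℕ => fun ω => A p.1 p.2 ω) μ)
    (Q Q' : ℕ → Fin 3 → Ω → ℕ)
    (hQ0 : ∀ i ω, Q 0 i ω = 0) (hQ'0 : ∀ i ω, Q' 0 i ω = 0)
    (hQevol : ∀ t i ω, Q (t + 1) i ω = Q t i ω - piTD (fun j => Q t j ω) i + A i t ω)
    (hQ'evol : ∀ t i ω, Q' (t + 1) i ω = Q' t i ω - piBU (fun j => Q' t j ω) i + A i t ω) :
    limsup (fun T : ℕ =>
        (∑ t ∈ Finset.range T, ∑ i, ∫⁻ ω, (Q t i ω : ℝ≥0∞) ∂μ) / (T : ℝ≥0∞))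
      atTop < ⊤ ∧
    limsup (fun T : ℕ =>
        (∑ t ∈ Finset.range T, ∑ i, ∫⁻ ω, (Q' t i ω : ℝ≥0∞) ∂μ) / (T : ℝ≥0∞))
      atTop < ⊤ := by
  constructor
  · exact main μ lam hlam hcap1 hcap2 A hAmeas hA01 hArate hAindep Q hQ0 hQevol
  · have hcap1' : lam (qswap 0) + lam (qswap 1) < 1 := by
      rw [qswap0, qswap1]; linarith
    have hcap2' : lam (qswap 1) + lam (qswap 2) < 1 := by
      rw [qswap1, qswap2]; linarith
    have hindep' : iIndepFun
        (fun p : Fin 3 × ℕ => fun ω => A (qswap p.1) p.2 ω) μ :=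
      iIndepFun_reindex (Equiv.prodCongr qswap (Equiv.refl ℕ)) _ hAindep
    have hmain := main μ (fun i => lam (qswap i)) (fun i => hlam (qswap i)) hcap1' hcap2'
      (fun i t => A (qswap i) t) (fun i t => hAmeas (qswap i) t)
      (fun i t ω => hA01 (qswap i) t ω) (fun i t => hArate (qswap i) t)
      hindep'
      (fun t i ω => Q' t (qswap i) ω) (fun i ω => hQ'0 (qswap i) ω)
      (fun t i ω => by
        show Q' (t+1) (qswap i) ω = _
        rw [hQ'evol t (qswap i) ω, piBU_swap (fun j => Q' t j ω) i])
    have hsum : (fun T : ℕ => (∑ t ∈ Finset.range T,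
          ∑ i, ∫⁻ ω, ((Q' t (qswap i) ω : ℕ) : ℝ≥0∞) ∂μ) / (T : ℝ≥0∞))
        = fun T : ℕ =>
          (∑ t ∈ Finset.range T, ∑ i, ∫⁻ ω, (Q' t i ω : ℝ≥0∞) ∂μ) / (T : ℝ≥0∞) := by
      funext T
      congr 1
      refine Finset.sum_congr rfl (fun t _ => ?_)
      exact Equiv.sum_comp qswap (fun i => ∫⁻ ω, (Q' t i ω : ℝ≥0∞) ∂μ)
    rw [hsum] at hmain
    exact hmain
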